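/- Let η, η̂ : X → [0,1] be measurable, let δ̄ ∈ [0,1], and let ε > 0 satisfy |η(x) − η̂(x)| ≤ ε for all x ∈ X. Suppose there exist k₁ > 0 and ν₀ ≥ ε such that for every ν ∈ (0, ν₀]: μ{x : 0 ≤ δ̄ − η(x) ≤ ν} ≤ k₁·ν and μ{x : 0 ≤ η(x) − δ̄ ≤ ν} ≤ k₁·ν. Then the threshold classifiers h := 𝟙[η ≥ δ̄] and ĥ := 𝟙[η̂ ≥ δ̄] have close confusion matrices: |TP(ĥ) − TP(h)| ≤ k₁·ε and |TN(ĥ) − TN(h)| ≤ k₁·ε, where TP and TN are computed with the true η. -/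

import Mathlib

open MeasureTheory Set

lemma integrable_of_bdd {X : Type*} [MeasurableSpace X] {μ : Measure X} [IsFiniteMeasure μ]
    {f : X → ℝ} (hf : Measurable f) (hbd : ∀ x, |f x| ≤ 1) : Integrable f μ :=
  (integrable_const (1:ℝ)).mono' hf.aestronglyMeasurable (ae_of_all _ fun x => by
    simpa using hbd x)

lemma indicator_integral_bound {X : Type*} [MeasurableSpace X] {μ : Measure X}
    [IsFiniteMeasure μ] {f : X → ℝ} (hf : Measurable f) (hf0 : ∀ x, 0 ≤ f x)
    (hf1 : ∀ x, f x ≤ 1) {A : Set X} (hA : MeasurableSet A) {c : ℝ}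
    (hc : (μ A).toReal ≤ c) :
    0 ≤ (∫ x, A.indicator f x ∂μ) ∧ (∫ x, A.indicator f x ∂μ) ≤ c := by
  have hint : Integrable (A.indicator f) μ :=
    (integrable_of_bdd hf (fun x => by rw [abs_le]; constructor <;> linarith [hf0 x, hf1 x])).indicator hA
  constructor
  · exact integral_nonneg (fun x => Set.indicator_nonneg (fun y _ => hf0 y) x)
  · have h1 : (∫ x, A.indicator f x ∂μ) ≤ ∫ x, A.indicator (fun _ => (1:ℝ)) x ∂μ := by
      apply integral_mono hint ((integrable_const (1:ℝ)).indicator hA)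
      intro x
      by_cases hx : x ∈ A <;> simp [hx, hf1 x]
    have h2 : (∫ x, A.indicator (fun _ => (1:ℝ)) x ∂μ) = (μ A).toReal := by
      rw [integral_indicator_const _ hA]; simp; rfl
    linarith

lemma key_bound {X : Type*} [MeasurableSpace X] {μ : Measure X} [IsFiniteMeasure μ]
    {f : X → ℝ} (hf : Measurable f) (hf0 : ∀ x, 0 ≤ f x) (hf1 : ∀ x, f x ≤ 1)
    {A B : Set X} (hA : MeasurableSet A) (hB : MeasurableSet B) {c : ℝ}
    (hcA : (μ A).toReal ≤ c) (hcB : (μ B).toReal ≤ c) :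
    |(∫ x, A.indicator f x ∂μ) - (∫ x, B.indicator f x ∂μ)| ≤ c := by
  obtain ⟨ha0, ha1⟩ := indicator_integral_bound hf hf0 hf1 hA hcA
  obtain ⟨hb0, hb1⟩ := indicator_integral_bound hf hf0 hf1 hB hcB
  rw [abs_sub_le_iff]; constructor <;> linarith

/-- If `η̂` is uniformly within `ε` of `η` and `η` has upper-bounded
density near the threshold `δ̄` (both sides), then the threshold classifiers
`h = 𝟙[η ≥ δ̄]` and `ĥ = 𝟙[η̂ ≥ δ̄]` have confusion matrices (computed with the true
`η`) within `k₁·ε` of each other in each coordinate. -/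
theorem estimated_threshold_confusion_close
    {X : Type*} [MeasurableSpace X] (μ : Measure X) [IsProbabilityMeasure μ]
    (η ηhat : X → ℝ) (hη : Measurable η) (hηhat : Measurable ηhat)
    (hη01 : ∀ x, η x ∈ Icc (0:ℝ) 1) (hηhat01 : ∀ x, ηhat x ∈ Icc (0:ℝ) 1)
    (δbar : ℝ) (hδbar : δbar ∈ Icc (0:ℝ) 1)
    (ε : ℝ) (hε : 0 < ε) (hclose : ∀ x, |η x - ηhat x| ≤ ε)
    (k₁ ν₀ : ℝ) (hk₁ : 0 < k₁) (hν₀ : ε ≤ ν₀)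
    (hdens_left : ∀ ν : ℝ, 0 < ν → ν ≤ ν₀ →
      (μ {x | 0 ≤ δbar - η x ∧ δbar - η x ≤ ν}).toReal ≤ k₁ * ν)
    (hdens_right : ∀ ν : ℝ, 0 < ν → ν ≤ ν₀ →
      (μ {x | 0 ≤ η x - δbar ∧ η x - δbar ≤ ν}).toReal ≤ k₁ * ν)
    (h hhat : X → ℝ)
    (hdef : h = {x | δbar ≤ η x}.indicator (fun _ => (1:ℝ)))
    (hhatdef : hhat = {x | δbar ≤ ηhat x}.indicator (fun _ => (1:ℝ))) :
    |(∫ x, η x * hhat x ∂μ) - (∫ x, η x * h x ∂μ)| ≤ k₁ * ε ∧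
    |(∫ x, (1 - η x) * (1 - hhat x) ∂μ) - (∫ x, (1 - η x) * (1 - h x) ∂μ)| ≤ k₁ * ε := by
  set A : Set X := {x | δbar ≤ ηhat x} \ {x | δbar ≤ η x} with hAdef
  set B : Set X := {x | δbar ≤ η x} \ {x | δbar ≤ ηhat x} with hBdef
  have hSη : MeasurableSet {x | δbar ≤ η x} := measurableSet_le measurable_const hη
  have hSηhat : MeasurableSet {x | δbar ≤ ηhat x} := measurableSet_le measurable_const hηhat
  have hA : MeasurableSet A := hSηhat.diff hSη
  have hB : MeasurableSet B := hSη.diff hSηhat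
  -- measure bounds
  have hμfin : ∀ s : Set X, μ s ≠ ⊤ := fun s => measure_ne_top μ s
  have hμA : (μ A).toReal ≤ k₁ * ε := by
    have hsub : A ⊆ {x | 0 ≤ δbar - η x ∧ δbar - η x ≤ ε} := by
      rintro x ⟨hx1, hx2⟩
      simp only [mem_setOf_eq, not_le] at hx1 hx2 ⊢
      have := (abs_le.mp (hclose x)).1
      constructor <;> linarith
    calc (μ A).toReal ≤ (μ {x | 0 ≤ δbar - η x ∧ δbar - η x ≤ ε}).toReal :=
          ENNReal.toReal_mono (hμfin _) (measure_mono hsub)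
      _ ≤ k₁ * ε := hdens_left ε hε hν₀
  have hμB : (μ B).toReal ≤ k₁ * ε := by
    have hsub : B ⊆ {x | 0 ≤ η x - δbar ∧ η x - δbar ≤ ε} := by
      rintro x ⟨hx1, hx2⟩
      simp only [mem_setOf_eq, not_le] at hx1 hx2 ⊢
      have := (abs_le.mp (hclose x)).2
      constructor <;> linarith
    calc (μ B).toReal ≤ (μ {x | 0 ≤ η x - δbar ∧ η x - δbar ≤ ε}).toReal :=
          ENNReal.toReal_mono (hμfin _) (measure_mono hsub)
      _ ≤ k₁ * ε := hdens_right ε hε hν₀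
  -- integrability facts
  have hηbd : ∀ x, |η x| ≤ 1 := fun x => abs_le.mpr ⟨by linarith [(hη01 x).1], (hη01 x).2⟩
  have hηmbd : ∀ x, |1 - η x| ≤ 1 := fun x =>
    abs_le.mpr ⟨by linarith [(hη01 x).2], by linarith [(hη01 x).1]⟩
  have hmh : Measurable h := by
    rw [hdef]; exact (measurable_const.indicator hSη)
  have hmhhat : Measurable hhat := by
    rw [hhatdef]; exact (measurable_const.indicator hSηhat)
  have hbd_h : ∀ x, |h x| ≤ 1 := by
    intro x; rw [hdef]; by_cases hx : x ∈ {x | δbar ≤ η x} <;> simp [hx]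
  have hbd_hhat : ∀ x, |hhat x| ≤ 1 := by
    intro x; rw [hhatdef]; by_cases hx : x ∈ {x | δbar ≤ ηhat x} <;> simp [hx]
  have hint1 : Integrable (fun x => η x * hhat x) μ :=
    integrable_of_bdd (hη.mul hmhhat) (fun x => by
      rw [abs_mul]
      calc |η x| * |hhat x| ≤ 1 * 1 := by
            apply mul_le_mul (hηbd x) (hbd_hhat x) (abs_nonneg _) zero_le_one
        _ = 1 := by ring)
  have hint2 : Integrable (fun x => η x * h x) μ :=
    integrable_of_bdd (hη.mul hmh) (fun x => by
      rw [abs_mul]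
      calc |η x| * |h x| ≤ 1 * 1 := by
            apply mul_le_mul (hηbd x) (hbd_h x) (abs_nonneg _) zero_le_one
        _ = 1 := by ring)
  have hint3 : Integrable (fun x => (1 - η x) * (1 - hhat x)) μ :=
    integrable_of_bdd ((measurable_const.sub hη).mul (measurable_const.sub hmhhat))
      (fun x => by
        rw [abs_mul]
        have h1 : |1 - hhat x| ≤ 1 := by
          rw [hhatdef]; by_cases hx : x ∈ {x | δbar ≤ ηhat x} <;> simp [hx]
        calc |1 - η x| * |1 - hhat x| ≤ 1 * 1 := by
              apply mul_le_mul (hηmbd x) h1 (abs_nonneg _) zero_le_one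
          _ = 1 := by ring)
  have hint4 : Integrable (fun x => (1 - η x) * (1 - h x)) μ :=
    integrable_of_bdd ((measurable_const.sub hη).mul (measurable_const.sub hmh))
      (fun x => by
        rw [abs_mul]
        have h1 : |1 - h x| ≤ 1 := by
          rw [hdef]; by_cases hx : x ∈ {x | δbar ≤ η x} <;> simp [hx]
        calc |1 - η x| * |1 - h x| ≤ 1 * 1 := by
              apply mul_le_mul (hηmbd x) h1 (abs_nonneg _) zero_le_one
          _ = 1 := by ring)
  have hintA : Integrable (A.indicator η) μ := (integrable_of_bdd hη hηbd).indicator hA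
  have hintB : Integrable (B.indicator η) μ := (integrable_of_bdd hη hηbd).indicator hB
  have hintA' : Integrable (A.indicator (fun x => 1 - η x)) μ :=
    (integrable_of_bdd (measurable_const.sub hη) hηmbd).indicator hA
  have hintB' : Integrable (B.indicator (fun x => 1 - η x)) μ :=
    (integrable_of_bdd (measurable_const.sub hη) hηmbd).indicator hB
  -- pointwise identities
  have hpt1 : ∀ x, η x * hhat x - η x * h x = A.indicator η x - B.indicator η x := by
    intro x
    by_cases h1 : x ∈ {x | δbar ≤ η x} <;> by_cases h2 : x ∈ {x | δbar ≤ ηhat x} <;>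
      simp [hdef, hhatdef, hAdef, hBdef, indicator, h1, h2]
  have hpt2 : ∀ x, (1 - η x) * (1 - hhat x) - (1 - η x) * (1 - h x)
      = B.indicator (fun y => 1 - η y) x - A.indicator (fun y => 1 - η y) x := by
    intro x
    by_cases h1 : x ∈ {x | δbar ≤ η x} <;> by_cases h2 : x ∈ {x | δbar ≤ ηhat x} <;>
      simp [hdef, hhatdef, hAdef, hBdef, indicator, h1, h2]
  constructor
  · have heq : (∫ x, η x * hhat x ∂μ) - (∫ x, η x * h x ∂μ)
        = (∫ x, A.indicator η x ∂μ) - (∫ x, B.indicator η x ∂μ) := by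
      rw [← integral_sub hint1 hint2, ← integral_sub hintA hintB]
      exact integral_congr_ae (ae_of_all _ hpt1)
    rw [heq]
    exact key_bound hη (fun x => (hη01 x).1) (fun x => (hη01 x).2) hA hB hμA hμB
  · have heq : (∫ x, (1 - η x) * (1 - hhat x) ∂μ) - (∫ x, (1 - η x) * (1 - h x) ∂μ)
        = (∫ x, B.indicator (fun y => 1 - η y) x ∂μ)
          - (∫ x, A.indicator (fun y => 1 - η y) x ∂μ) := by
      rw [← integral_sub hint3 hint4, ← integral_sub hintB' hintA']
      exact integral_congr_ae (ae_of_all _ hpt2)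
    rw [heq]
    exact key_bound (measurable_const.sub hη) (fun x => by simp only [Pi.sub_apply]; linarith [(hη01 x).2])
      (fun x => by simp only [Pi.sub_apply]; linarith [(hη01 x).1]) hB hA hμB hμA
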